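/- Let n ≥ 1, let T ≥ 0, and let X be a real symmetric n×n matrix satisfying the linear relaxation constraints (X_{ii} ≥ 0 for all i, and X_{ii} + X_{jj} + 2X_{ij} ≥ 0 and X_{ii} + X_{jj} − 2X_{ij} ≥ 0 for all i, j) and tr(X) = T. Then the smallest eigenvalue of X satisfies λ_min(X) ≥ T/n − (T/n)·√((n³ − 1)(n − 1)). -/

import Mathlib

open Matrix

/-- For a real symmetric `n × n` matrix `X` satisfying the linear
relaxation constraints with `tr X = T`, every eigenvalue of `X` (in particular the
smallest) is at least `T / n - (T / n) * √((n³ - 1) * (n - 1))`. -/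
theorem stmt_2 (n : ℕ) (hn : 1 ≤ n) (T : ℝ) (hT : 0 ≤ T)
    (X : Matrix (Fin n) (Fin n) ℝ) (hX : X.IsHermitian)
    (hdiag : ∀ i, 0 ≤ X i i)
    (hplus : ∀ i j, 0 ≤ X i i + X j j + 2 * X i j)
    (hminus : ∀ i j, 0 ≤ X i i + X j j - 2 * X i j)
    (htr : X.trace = T) :
    ∀ i, T / n - (T / n) * Real.sqrt (((n : ℝ) ^ 3 - 1) * ((n : ℝ) - 1))
      ≤ hX.eigenvalues i := by
  intro i
  have hne : Nonempty (Fin n) := ⟨⟨0, hn⟩⟩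
  set lam := hX.eigenvalues i with hlam
  set v : Fin n → ℝ := ⇑(hX.eigenvectorBasis i) with hv
  have hmul : X *ᵥ v = lam • v := hX.mulVec_eigenvectorBasis i
  have hvne : v ≠ 0 := by
    have h := hX.eigenvectorBasis.orthonormal.ne_zero i
    intro h0
    exact h (by ext j; exact congrFun h0 j)
  -- choose index of maximal |v j|
  obtain ⟨i0, -, hmax⟩ := Finset.exists_max_image Finset.univ (fun j => |v j|)
    Finset.univ_nonempty
  simp only [Finset.mem_univ, forall_true_left] at hmax
  have hvi0 : v i0 ≠ 0 := by
    intro h0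
    apply hvne
    funext j
    have hj := hmax j
    rw [h0, abs_zero] at hj
    exact abs_nonpos_iff.mp hj
  have hvpos : 0 < |v i0| := abs_pos.mpr hvi0
  -- Gershgorin
  have happ : ∑ j, X i0 j * v j = lam * v i0 := by
    have := congrFun hmul i0
    simpa [Matrix.mulVec, dotProduct] using this
  have hsplit : (lam - X i0 i0) * v i0 = ∑ j ∈ Finset.univ.erase i0, X i0 j * v j := by
    have h := Finset.add_sum_erase Finset.univ (fun j => X i0 j * v j)
      (Finset.mem_univ i0)
    rw [happ] at h
    beta_reduce at h
    linear_combination (-1 : ℝ) * h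
  set R : ℝ := ∑ j ∈ Finset.univ.erase i0, |X i0 j| with hR
  have habs : |lam - X i0 i0| * |v i0| ≤ R * |v i0| := by
    rw [← abs_mul, hsplit]
    calc |∑ j ∈ Finset.univ.erase i0, X i0 j * v j|
        ≤ ∑ j ∈ Finset.univ.erase i0, |X i0 j * v j| :=
          Finset.abs_sum_le_sum_abs _ _
      _ ≤ ∑ j ∈ Finset.univ.erase i0, |X i0 j| * |v i0| := by
          apply Finset.sum_le_sum
          intro j _
          rw [abs_mul]
          exact mul_le_mul_of_nonneg_left (hmax j) (abs_nonneg _)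
      _ = R * |v i0| := (Finset.sum_mul _ _ _).symm
  have hgersh : |lam - X i0 i0| ≤ R := le_of_mul_le_mul_right habs hvpos
  have hlow : X i0 i0 - R ≤ lam := by
    have := (abs_le.mp hgersh).1
    linarith
  -- bound R
  have hRle : R ≤ ∑ j ∈ Finset.univ.erase i0, (X i0 i0 + X j j) / 2 := by
    apply Finset.sum_le_sum
    intro j _
    have h1 := hplus i0 j
    have h2 := hminus i0 j
    rw [abs_le]
    constructor <;> linarith
  -- trace decomposition
  have htrace : ∑ j, X j j = T := by
    rw [← htr]; rfl
  have hTd : X i0 i0 + ∑ j ∈ Finset.univ.erase i0, X j j = T := by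
    rw [← htrace]
    exact Finset.add_sum_erase Finset.univ (fun j => X j j) (Finset.mem_univ i0)
  have hcard : (Finset.univ.erase i0).card = n - 1 := by
    rw [Finset.card_erase_of_mem (Finset.mem_univ i0), Finset.card_univ, Fintype.card_fin]
  have hsum2 : ∑ j ∈ Finset.univ.erase i0, (X i0 i0 + X j j) / 2
      = (((n : ℝ) - 1) * X i0 i0 + (T - X i0 i0)) / 2 := by
    rw [← Finset.sum_div]
    congr 1
    rw [Finset.sum_add_distrib, Finset.sum_const, hcard, nsmul_eq_mul]
    have hc : ((n - 1 : ℕ) : ℝ) = (n : ℝ) - 1 := by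
      have : (1:ℕ) ≤ n := hn
      push_cast [this]
      ring
    rw [hc]
    have : ∑ j ∈ Finset.univ.erase i0, X j j = T - X i0 i0 := by linarith
    rw [this]
  -- so far: lam ≥ d - ((n-1)d + (T-d))/2 with d := X i0 i0, 0 ≤ d ≤ T
  set d := X i0 i0 with hd
  have hd0 : 0 ≤ d := hdiag i0
  have hdT : d ≤ T := by
    have hnn : 0 ≤ ∑ j ∈ Finset.univ.erase i0, X j j :=
      Finset.sum_nonneg fun j _ => hdiag j
    linarith
  have hkey : d - (((n : ℝ) - 1) * d + (T - d)) / 2 ≤ lam := by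
    have := hRle.trans_eq hsum2
    linarith
  rcases eq_or_lt_of_le hn with h1 | h2
  · -- n = 1
    have hn1 : n = 1 := h1.symm
    subst hn1
    have herase : (Finset.univ.erase i0 : Finset (Fin 1)) = ∅ := by
      apply Finset.card_eq_zero.mp
      rw [hcard]
    have hdeq : d = T := by
      rw [herase, Finset.sum_empty] at hTd
      linarith
    rw [hdeq] at hkey
    push_cast at hkey
    have h0 : Real.sqrt (((1:ℝ)^3 - 1) * ((1:ℝ) - 1)) = 0 := by norm_num
    push_cast
    rw [h0]
    linarith
  · -- 2 ≤ n
    have hn2 : (2 : ℝ) ≤ (n : ℝ) := by exact_mod_cast h2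
    have hsq : 1 + (n : ℝ) * ((n : ℝ) - 1) / 2
        ≤ Real.sqrt (((n : ℝ) ^ 3 - 1) * ((n : ℝ) - 1)) := by
      rw [show (1 + (n:ℝ) * ((n:ℝ) - 1) / 2) = Real.sqrt ((1 + (n:ℝ) * ((n:ℝ)-1)/2)^2) from
        (Real.sqrt_sq (by nlinarith)).symm]
      apply Real.sqrt_le_sqrt
      nlinarith [sq_nonneg ((n:ℝ) - 2), sq_nonneg ((n:ℝ)^2 - 1)]
    have hTn : 0 ≤ T / (n : ℝ) := div_nonneg hT (by positivity)
    have hne' : (n : ℝ) ≠ 0 := by positivity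
    have hmul' := mul_le_mul_of_nonneg_left hsq hTn
    have hid : T / (n:ℝ) * (1 + (n:ℝ) * ((n:ℝ) - 1) / 2)
        = T / (n:ℝ) + ((n:ℝ) - 1) * T / 2 := by
      field_simp
    have hstep : T / n - T / n * Real.sqrt (((n : ℝ) ^ 3 - 1) * ((n : ℝ) - 1))
        ≤ -(((n : ℝ) - 1) * T / 2) := by
      rw [hid] at hmul'
      linarith
    have hstep2 : -(((n : ℝ) - 1) * T / 2) ≤ d - (((n : ℝ) - 1) * d + (T - d)) / 2 := by
      nlinarith [mul_nonneg (sub_nonneg.mpr hdT) (by linarith : (0:ℝ) ≤ (n:ℝ) - 2), hd0]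
    linarith
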